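/- Let $m \in \mathbb{N}$ be even and define $\varphi_m(y) = \frac{m!}{y^m}\left(e^y - \sum_{l=0}^{m-1} \frac{y^l}{l!}\right)$ for $y \ne 0$, with $\varphi_m(0) = 1$. Then: (1) $\lim_{y\to 0}\varphi_m(y) = 1$, so $\varphi_m$ is continuous; (2) $\varphi_m$ is monotonically increasing on $[0,\infty)$; (3) $0 < \varphi_m(y) < 1$ for every $y < 0$; (4) $\varphi_m$ is nonnegative on $\mathbb{R}$. -/

import Mathlib

open Finset Filter

private noncomputable def Fφ (n : ℕ) (y : ℝ) : ℝ :=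
  Real.exp y - ∑ l ∈ Finset.range n, y ^ l / l.factorial

private lemma Fφ_cont (n : ℕ) : Continuous (Fφ n) := by
  unfold Fφ
  exact Real.continuous_exp.sub
    (continuous_finset_sum _ fun l _ => (continuous_pow l).div_const _)

private lemma hasDerivAt_S (n : ℕ) (y : ℝ) :
    HasDerivAt (fun x : ℝ => ∑ l ∈ Finset.range (n + 1), x ^ l / l.factorial)
      (∑ l ∈ Finset.range n, y ^ l / l.factorial) y := by
  have h : HasDerivAt (fun x : ℝ => ∑ l ∈ Finset.range (n + 1), x ^ l / l.factorial)
      (∑ l ∈ Finset.range (n + 1), (l : ℝ) * y ^ (l - 1) / l.factorial) y := by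
    apply HasDerivAt.fun_sum
    intro l _
    simpa using (hasDerivAt_pow l y).div_const (l.factorial : ℝ)
  convert h using 1
  rw [Finset.sum_range_succ' (fun l => (l : ℝ) * y ^ (l - 1) / l.factorial) n]
  have he : ∀ i : ℕ, ((i : ℝ) + 1) * y ^ i / ((i + 1).factorial : ℝ) = y ^ i / i.factorial := by
    intro i
    rw [Nat.factorial_succ]
    have h1 : (i.factorial : ℝ) ≠ 0 := Nat.cast_ne_zero.mpr i.factorial_ne_zero
    have h2 : ((i : ℝ) + 1) ≠ 0 := by positivity
    push_cast
    field_simp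
  simp only [Nat.cast_zero, zero_mul, zero_div, add_zero, Nat.cast_add, Nat.cast_one,
    Nat.add_sub_cancel]
  exact Finset.sum_congr rfl fun i _ => (he i).symm

private lemma Fφ_deriv (n : ℕ) (y : ℝ) : HasDerivAt (Fφ (n + 1)) (Fφ n y) y :=
  (Real.hasDerivAt_exp y).sub (hasDerivAt_S n y)

private lemma Fφ_zero (n : ℕ) (hn : 1 ≤ n) : Fφ n 0 = 0 := by
  unfold Fφ
  rw [Real.exp_zero, Finset.sum_eq_single 0]
  · simp
  · intro l _ hl0; simp [zero_pow hl0]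
  · intro h; simp at h; omega

private lemma Fφ_sign : ∀ n : ℕ, ∀ y : ℝ, y < 0 →
    (Odd (n + 1) → Fφ (n + 1) y < 0) ∧ (Even (n + 1) → 0 < Fφ (n + 1) y) := by
  intro n
  induction n with
  | zero =>
    intro y hy
    constructor
    · intro _
      simp only [Fφ, zero_add, Finset.sum_range_one, pow_zero, Nat.factorial_zero, Nat.cast_one]
      have : Real.exp y < 1 := Real.exp_lt_one_iff.mpr hy
      linarith
    · intro h
      simp at h
  | succ n ih =>
    intro y hy
    have hderiv : ∀ x : ℝ, deriv (Fφ (n + 2)) x = Fφ (n + 1) x :=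
      fun x => (Fφ_deriv (n + 1) x).deriv
    have hcont : ContinuousOn (Fφ (n + 2)) (Set.Iic 0) := (Fφ_cont _).continuousOn
    constructor
    · intro hodd
      have heven : Even (n + 1) := Nat.not_odd_iff_even.mp (Nat.odd_add_one.mp hodd)
      have hpos : ∀ x ∈ Set.Iio (0 : ℝ), 0 < deriv (Fφ (n + 2)) x :=
        fun x hx => (hderiv x) ▸ ((ih x hx).2 heven)
      have hmono : StrictMonoOn (Fφ (n + 2)) (Set.Iic 0) :=
        strictMonoOn_of_deriv_pos (convex_Iic 0) hcont (by rwa [interior_Iic])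
      have h := hmono (Set.mem_Iic.mpr hy.le) (Set.mem_Iic.mpr le_rfl) hy
      rwa [Fφ_zero _ (by omega)] at h
    · intro heven
      have hodd : Odd (n + 1) := by
        rw [Nat.even_add_one] at heven
        exact Nat.not_even_iff_odd.mp heven
      have hneg : ∀ x ∈ Set.Iio (0 : ℝ), deriv (Fφ (n + 2)) x < 0 :=
        fun x hx => (hderiv x) ▸ ((ih x hx).1 hodd)
      have hanti : StrictAntiOn (Fφ (n + 2)) (Set.Iic 0) :=
        strictAntiOn_of_deriv_neg (convex_Iic 0) hcont (by rwa [interior_Iic])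
      have h := hanti (Set.mem_Iic.mpr hy.le) (Set.mem_Iic.mpr le_rfl) hy
      rwa [Fφ_zero _ (by omega)] at h

private lemma coe_le (m k : ℕ) :
    (m.factorial : ℝ) / ((m + k).factorial : ℝ) ≤ 1 / k.factorial := by
  rw [div_le_div_iff₀ (by positivity) (by positivity)]
  have h : m.factorial * k.factorial ≤ (m + k).factorial :=
    Nat.le_of_dvd (Nat.factorial_pos _) (Nat.factorial_mul_factorial_dvd_factorial_add m k)
  calc (m.factorial : ℝ) * k.factorial = (m.factorial * k.factorial : ℕ) := by push_cast; ring
    _ ≤ ((m + k).factorial : ℕ) := Nat.cast_le.mpr h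
    _ = 1 * ((m + k).factorial : ℝ) := by rw [one_mul]

private lemma summable_c (m : ℕ) (y : ℝ) :
    Summable (fun k : ℕ => (m.factorial : ℝ) / ((m + k).factorial) * y ^ k) := by
  apply Summable.of_norm_bounded (Real.summable_pow_div_factorial |y|)
  intro k
  rw [norm_mul, norm_div, norm_pow, Real.norm_eq_abs, Real.norm_eq_abs, Real.norm_eq_abs,
    Nat.abs_cast, Nat.abs_cast]
  calc (m.factorial : ℝ) / ((m + k).factorial) * |y| ^ k
      ≤ 1 / k.factorial * |y| ^ k :=
        mul_le_mul_of_nonneg_right (coe_le m k) (pow_nonneg (abs_nonneg y) k)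
    _ = |y| ^ k / k.factorial := by ring

private lemma phi_repr (m : ℕ) (φ : ℝ → ℝ)
    (hφ : ∀ y : ℝ, φ y = if y = 0 then 1 else
      (m.factorial : ℝ) / y ^ m *
        (Real.exp y - ∑ l ∈ Finset.range m, y ^ l / l.factorial)) :
    ∀ y : ℝ, φ y = ∑' k : ℕ, (m.factorial : ℝ) / ((m + k).factorial) * y ^ k := by
  intro y
  rcases eq_or_ne y 0 with rfl | hy
  · rw [hφ, if_pos rfl, tsum_eq_single 0 ?_]
    · rw [pow_zero, mul_one, Nat.add_zero,
        div_self (Nat.cast_ne_zero.mpr m.factorial_ne_zero : (m.factorial:ℝ) ≠ 0)]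
    · intro k hk; simp [zero_pow hk]
  · rw [hφ, if_neg hy]
    have hexp : Real.exp y = ∑' n : ℕ, y ^ n / n.factorial := by
      rw [Real.exp_eq_exp_ℝ, NormedSpace.exp_eq_tsum_div]
    have hsum : Summable (fun n : ℕ => y ^ n / (n.factorial : ℝ)) :=
      Real.summable_pow_div_factorial y
    have hsplit := Summable.sum_add_tsum_nat_add m hsum
    have h2 : Real.exp y - ∑ l ∈ Finset.range m, y ^ l / l.factorial
        = ∑' k : ℕ, y ^ (k + m) / ((k + m).factorial : ℝ) := by
      rw [hexp]; linarith [hsplit]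
    rw [h2, ← tsum_mul_left]
    apply tsum_congr
    intro k
    have hym : y ^ m ≠ 0 := pow_ne_zero _ hy
    have hf : (((k + m).factorial : ℝ)) ≠ 0 := Nat.cast_ne_zero.mpr (k + m).factorial_ne_zero
    rw [add_comm m k]
    rw [pow_add]
    field_simp

/-- properties of `φₘ(y) = (m!/yᵐ)(eʸ - ∑_{l<m} yˡ/l!)`, with `φₘ(0) = 1`,
for an even `m`. -/
theorem stmt_7 (m : ℕ) (hm : 2 ≤ m) (hme : Even m) (φ : ℝ → ℝ)
    (hφ : ∀ y : ℝ, φ y = if y = 0 then 1 else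
      (m.factorial : ℝ) / y ^ m *
        (Real.exp y - ∑ l ∈ Finset.range m, y ^ l / l.factorial)) :
    Filter.Tendsto φ (nhds 0) (nhds 1) ∧ Continuous φ ∧
    MonotoneOn φ (Set.Ici (0:ℝ)) ∧
    (∀ y : ℝ, y < 0 → 0 < φ y ∧ φ y < 1) ∧
    (∀ y : ℝ, 0 ≤ φ y) := by
  have hfac : (0:ℝ) < m.factorial := Nat.cast_pos.mpr m.factorial_pos
  have hfne : (m.factorial : ℝ) ≠ 0 := ne_of_gt hfac
  -- key identity : φ y - 1 = (m!/yᵐ) · Fφ (m+1) y for y ≠ 0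
  have hid : ∀ y : ℝ, y ≠ 0 → φ y - 1 = (m.factorial : ℝ) / y ^ m * Fφ (m + 1) y := by
    intro y hy
    rw [hφ y, if_neg hy]
    unfold Fφ
    rw [Finset.sum_range_succ]
    have hym : y ^ m ≠ 0 := pow_ne_zero _ hy
    field_simp
    ring
  -- part 3
  have h3 : ∀ y : ℝ, y < 0 → 0 < φ y ∧ φ y < 1 := by
    intro y hy
    obtain ⟨n, hn⟩ : ∃ n, m = n + 1 := ⟨m - 1, by omega⟩
    have hym : (0:ℝ) < y ^ m := hme.pow_pos (ne_of_lt hy)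
    have hFpos : 0 < Fφ m y := by
      rw [hn]; exact (Fφ_sign n y hy).2 (hn ▸ hme)
    have hFneg : Fφ (m + 1) y < 0 := (Fφ_sign m y hy).1 (Even.add_one hme)
    constructor
    · rw [hφ y, if_neg (ne_of_lt hy)]
      exact mul_pos (div_pos hfac hym) hFpos
    · have h := hid y (ne_of_lt hy)
      have : φ y - 1 < 0 := by
        rw [h]; exact mul_neg_of_pos_of_neg (div_pos hfac hym) hFneg
      linarith
  -- tendsto
  set K : ℝ := ((m + 1).succ : ℝ) / (((m + 1).factorial : ℝ) * ((m + 1 : ℕ) : ℝ)) with hK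
  have hKnn : 0 ≤ K := by positivity
  have hbound : ∀ y : ℝ, |y| ≤ 1 → |φ y - 1| ≤ (m.factorial : ℝ) * K * |y| := by
    intro y hy1
    rcases eq_or_ne y 0 with rfl | hy
    · rw [hφ 0, if_pos rfl]; simp
    · have hya : (0:ℝ) < |y| := abs_pos.mpr hy
      have hFb : |Fφ (m + 1) y| ≤ |y| ^ (m + 1) * K :=
        Real.exp_bound hy1 (n := m + 1) (by omega)
      rw [hid y hy, abs_mul, abs_div, abs_pow, Nat.abs_cast]
      calc (m.factorial : ℝ) / |y| ^ m * |Fφ (m + 1) y|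
          ≤ (m.factorial : ℝ) / |y| ^ m * (|y| ^ (m + 1) * K) :=
            mul_le_mul_of_nonneg_left hFb (by positivity)
        _ = (m.factorial : ℝ) * K * |y| := by
            rw [pow_succ]
            field_simp
  have h1 : Filter.Tendsto (fun y : ℝ => φ y - 1) (nhds 0) (nhds 0) := by
    have hev : ∀ᶠ y : ℝ in nhds 0, ‖φ y - 1‖ ≤ (m.factorial : ℝ) * K * |y| := by
      filter_upwards [Metric.ball_mem_nhds (0:ℝ) one_pos] with y hy
      rw [Metric.mem_ball, Real.dist_eq, sub_zero] at hy
      rw [Real.norm_eq_abs]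
      exact hbound y hy.le
    have hg : Filter.Tendsto (fun y : ℝ => (m.factorial : ℝ) * K * |y|) (nhds 0) (nhds 0) := by
      have hc : Continuous (fun y : ℝ => (m.factorial : ℝ) * K * |y|) :=
        continuous_const.mul continuous_abs
      have := hc.tendsto (0:ℝ)
      simpa using this
    exact squeeze_zero_norm' hev hg
  have htend : Filter.Tendsto φ (nhds 0) (nhds 1) := by
    have := h1.add_const 1
    simpa using this
  -- continuity
  have hcont : Continuous φ := by
    rw [continuous_iff_continuousAt]
    intro x
    rcases eq_or_ne x 0 with rfl | hx
    · unfold ContinuousAt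
      rw [hφ 0, if_pos rfl]
      exact htend
    · have heq : (fun y : ℝ => (m.factorial : ℝ) / y ^ m *
          (Real.exp y - ∑ l ∈ Finset.range m, y ^ l / l.factorial)) =ᶠ[nhds x] φ := by
        filter_upwards [isOpen_compl_singleton.mem_nhds
          (Set.mem_compl_singleton_iff.mpr hx)] with y hy
        rw [hφ y, if_neg (Set.mem_compl_singleton_iff.mp hy)]
      have hca : ContinuousAt (fun y : ℝ => (m.factorial : ℝ) / y ^ m *
          (Real.exp y - ∑ l ∈ Finset.range m, y ^ l / l.factorial)) x := by
        apply ContinuousAt.mul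
        · exact continuousAt_const.div ((continuous_pow m).continuousAt) (pow_ne_zero _ hx)
        · exact (Real.continuous_exp.sub
            (continuous_finset_sum _ fun l _ => (continuous_pow l).div_const _)).continuousAt
      exact hca.congr heq
  -- monotone & nonneg via series representation
  have hrepr := phi_repr m φ hφ
  have hmono : MonotoneOn φ (Set.Ici (0:ℝ)) := by
    intro a ha b hb hab
    rw [hrepr a, hrepr b]
    refine Summable.tsum_le_tsum (fun k => ?_) (summable_c m a) (summable_c m b)
    exact mul_le_mul_of_nonneg_left (pow_le_pow_left₀ ha hab k) (by positivity)
  have hnn : ∀ y : ℝ, 0 ≤ φ y := by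
    intro y
    rcases lt_or_ge y 0 with hy | hy
    · exact (h3 y hy).1.le
    · rw [hrepr y]
      exact tsum_nonneg fun k => mul_nonneg (by positivity) (pow_nonneg hy k)
  exact ⟨htend, hcont, hmono, h3, hnn⟩
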